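/- Let u, v be unit vectors in ℝ^d (d ≥ 4) with angle θ = arccos(u·v) ∈ [0, 9π/10], and 0 ≤ ξ ≤ θ/(4√d). Let x be uniform on {x ∈ S^{d-1} : v · x = ξ}. Then E[(u · x)·𝟙{u · x < 0}] ≤ ξ - θ/(36√d). -/

import Mathlib

open MeasureTheory
open scoped RealInnerProductSpace

/-- The uniform probability distribution on the slice `{x ∈ S^{d-1} : v·x = ξ}`:
a probability measure concentrated on the slice that is invariant under every
linear isometry of `ℝ^d` fixing `v`. -/
def IsUniformOnSlice {d : ℕ} (v : EuclideanSpace ℝ (Fin d)) (ξ : ℝ)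
    (μ : Measure (EuclideanSpace ℝ (Fin d))) : Prop :=
  IsProbabilityMeasure μ ∧ μ {x | ‖x‖ = 1 ∧ ⟪v, x⟫ = ξ}ᶜ = 0 ∧
    ∀ f : EuclideanSpace ℝ (Fin d) ≃ₗᵢ[ℝ] EuclideanSpace ℝ (Fin d),
      f v = v → Measure.map (⇑f) μ = μ

lemma exists_isometry_fix {E : Type*} [NormedAddCommGroup E] [InnerProductSpace ℝ E]
    [FiniteDimensional ℝ E] (a a' : E) (hnorm : ‖a‖ = ‖a'‖) :
    ∃ f : E ≃ₗᵢ[ℝ] E, f a = a' ∧ ∀ y : E, ⟪a, y⟫ = 0 → ⟪a', y⟫ = 0 → f y = y := by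
  by_cases h : a = a'
  · exact ⟨LinearIsometryEquiv.refl ℝ E, by simp [h], fun y _ _ => rfl⟩
  · set c := a - a' with hc
    have hc0 : c ≠ 0 := sub_ne_zero.2 h
    set K : Submodule ℝ E := (ℝ ∙ c)ᗮ with hK
    have hrefc : Submodule.reflection K c = -c := by
      apply Submodule.reflection_mem_subspace_orthogonalComplement_eq_neg
      rw [hK, Submodule.orthogonal_orthogonal]
      exact Submodule.mem_span_singleton_self c
    have hfix : ∀ y : E, ⟪a, y⟫ = 0 → ⟪a', y⟫ = 0 → Submodule.reflection K y = y := by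
      intro y h1 h2
      apply Submodule.reflection_mem_subspace_eq_self
      rw [hK, Submodule.mem_orthogonal_singleton_iff_inner_right]
      rw [hc, inner_sub_left, h1, h2, sub_zero]
    refine ⟨Submodule.reflection K, ?_, hfix⟩
    have hm : Submodule.reflection K ((2:ℝ)⁻¹ • (a + a')) = (2:ℝ)⁻¹ • (a + a') := by
      apply Submodule.reflection_mem_subspace_eq_self
      rw [hK, Submodule.mem_orthogonal_singleton_iff_inner_right]
      rw [hc, inner_smul_right, inner_sub_left, inner_add_right, inner_add_right,
        real_inner_self_eq_norm_sq, real_inner_self_eq_norm_sq, real_inner_comm a' a, hnorm]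
      ring
    have hsplit : a = (2:ℝ)⁻¹ • (a + a') + (2:ℝ)⁻¹ • c := by
      rw [hc]; module
    calc Submodule.reflection K a = Submodule.reflection K ((2:ℝ)⁻¹ • (a + a')) + (2:ℝ)⁻¹ • Submodule.reflection K c := by
          rw [← LinearIsometryEquiv.map_smul, ← LinearIsometryEquiv.map_add, ← hsplit]
      _ = a' := by rw [hm, hrefc, hc]; module

lemma exists_isometry_pair {E : Type*} [NormedAddCommGroup E] [InnerProductSpace ℝ E]
    [FiniteDimensional ℝ E] (v a₁ a₂ b₁ b₂ : E)
    (ha₁ : ‖a₁‖ = ‖b₁‖) (ha₂ : ‖a₂‖ = ‖b₂‖)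
    (hva₁ : ⟪v, a₁⟫ = 0) (hva₂ : ⟪v, a₂⟫ = 0) (hvb₁ : ⟪v, b₁⟫ = 0) (hvb₂ : ⟪v, b₂⟫ = 0)
    (ha : ⟪a₁, a₂⟫ = 0) (hb : ⟪b₁, b₂⟫ = 0) :
    ∃ f : E ≃ₗᵢ[ℝ] E, f v = v ∧ f a₁ = b₁ ∧ f a₂ = b₂ := by
  obtain ⟨f₁, hf₁, hfix₁⟩ := exists_isometry_fix a₁ b₁ ha₁
  have hf₁v : f₁ v = v := hfix₁ v (by rw [real_inner_comm]; exact hva₁)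
    (by rw [real_inner_comm]; exact hvb₁)
  have hna₂ : ‖f₁ a₂‖ = ‖b₂‖ := by rw [f₁.norm_map]; exact ha₂
  obtain ⟨f₂, hf₂, hfix₂⟩ := exists_isometry_fix (f₁ a₂) b₂ hna₂
  have hv2 : ⟪f₁ a₂, v⟫ = 0 := by
    rw [real_inner_comm]
    calc ⟪v, f₁ a₂⟫ = ⟪f₁ v, f₁ a₂⟫ := by rw [hf₁v]
      _ = ⟪v, a₂⟫ := f₁.inner_map_map v a₂
      _ = 0 := hva₂
  have hf₂v : f₂ v = v := hfix₂ v hv2 (by rw [real_inner_comm]; exact hvb₂)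
  have hf₂b₁ : f₂ b₁ = b₁ := by
    apply hfix₂ b₁
    · rw [← hf₁, f₁.inner_map_map, real_inner_comm]; exact ha
    · rw [real_inner_comm]; exact hb
  exact ⟨f₁.trans f₂, by simp [hf₁v, hf₂v], by simp [hf₁, hf₂b₁], by simp [hf₂]⟩

lemma integral_comp_isometry {d : ℕ} {v : EuclideanSpace ℝ (Fin d)}
    {μ : Measure (EuclideanSpace ℝ (Fin d))}
    (hinv : ∀ f : EuclideanSpace ℝ (Fin d) ≃ₗᵢ[ℝ] EuclideanSpace ℝ (Fin d),
      f v = v → Measure.map (⇑f) μ = μ)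
    (f : EuclideanSpace ℝ (Fin d) ≃ₗᵢ[ℝ] EuclideanSpace ℝ (Fin d)) (hf : f v = v)
    (g : EuclideanSpace ℝ (Fin d) → ℝ) (hg : AEStronglyMeasurable g μ) :
    ∫ x, g (f x) ∂μ = ∫ x, g x ∂μ := by
  conv_rhs => rw [← hinv f hf]
  rw [integral_map f.continuous.measurable.aemeasurable]
  rwa [hinv f hf]

lemma integral_pair_eq {d : ℕ} {v : EuclideanSpace ℝ (Fin d)}
    {μ : Measure (EuclideanSpace ℝ (Fin d))}
    (hinv : ∀ f : EuclideanSpace ℝ (Fin d) ≃ₗᵢ[ℝ] EuclideanSpace ℝ (Fin d),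
      f v = v → Measure.map (⇑f) μ = μ)
    (a₁ a₂ b₁ b₂ : EuclideanSpace ℝ (Fin d))
    (ha₁ : ‖a₁‖ = ‖b₁‖) (ha₂ : ‖a₂‖ = ‖b₂‖)
    (hva₁ : ⟪v, a₁⟫ = 0) (hva₂ : ⟪v, a₂⟫ = 0) (hvb₁ : ⟪v, b₁⟫ = 0) (hvb₂ : ⟪v, b₂⟫ = 0)
    (ha : ⟪a₁, a₂⟫ = 0) (hb : ⟪b₁, b₂⟫ = 0) (g : ℝ → ℝ → ℝ) (hg : Continuous fun p : ℝ × ℝ => g p.1 p.2) :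
    ∫ x, g ⟪a₁, x⟫ ⟪a₂, x⟫ ∂μ = ∫ x, g ⟪b₁, x⟫ ⟪b₂, x⟫ ∂μ := by
  obtain ⟨f, hfv, hf₁, hf₂⟩ := exists_isometry_pair v a₁ a₂ b₁ b₂ ha₁ ha₂ hva₁ hva₂ hvb₁ hvb₂ ha hb
  have hcont : Continuous fun x : EuclideanSpace ℝ (Fin d) => g ⟪b₁, x⟫ ⟪b₂, x⟫ := by
    exact hg.comp ((continuous_const.inner continuous_id).prodMk
      (continuous_const.inner continuous_id))
  have := integral_comp_isometry hinv f hfv _ hcont.aestronglyMeasurable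
  rw [← this]
  congr 1; funext x
  rw [← hf₁, ← hf₂, f.inner_map_map, f.inner_map_map]

lemma integral_single_eq {d : ℕ} {v : EuclideanSpace ℝ (Fin d)}
    {μ : Measure (EuclideanSpace ℝ (Fin d))}
    (hinv : ∀ f : EuclideanSpace ℝ (Fin d) ≃ₗᵢ[ℝ] EuclideanSpace ℝ (Fin d),
      f v = v → Measure.map (⇑f) μ = μ)
    (a b : EuclideanSpace ℝ (Fin d)) (hab : ‖a‖ = ‖b‖)
    (hva : ⟪v, a⟫ = 0) (hvb : ⟪v, b⟫ = 0) (g : ℝ → ℝ) (hg : Continuous g) :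
    ∫ x, g ⟪a, x⟫ ∂μ = ∫ x, g ⟪b, x⟫ ∂μ := by
  obtain ⟨f, hfa, hfix⟩ := exists_isometry_fix a b hab
  have hfv : f v = v := hfix v (by rw [real_inner_comm]; exact hva)
    (by rw [real_inner_comm]; exact hvb)
  have hcont : Continuous fun x : EuclideanSpace ℝ (Fin d) => g ⟪b, x⟫ :=
    hg.comp (continuous_const.inner continuous_id)
  have := integral_comp_isometry hinv f hfv _ hcont.aestronglyMeasurable
  rw [← this]
  congr 1; funext x
  rw [← hfa, f.inner_map_map]

lemma integral_cauchy_schwarz {α : Type*} [MeasurableSpace α] (μ : Measure α) (f g : α → ℝ)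
    (hf2 : Integrable (fun x => f x ^ 2) μ) (hg2 : Integrable (fun x => g x ^ 2) μ)
    (hfg : Integrable (fun x => f x * g x) μ) :
    (∫ x, f x * g x ∂μ) ^ 2 ≤ (∫ x, f x ^ 2 ∂μ) * ∫ x, g x ^ 2 ∂μ := by
  have expand : ∀ t : ℝ, (fun x => (t * f x + g x) ^ 2)
      = fun x => t ^ 2 * f x ^ 2 + (2 * t) * (f x * g x) + g x ^ 2 := by
    intro t; funext x; ring
  have key : ∀ t : ℝ, 0 ≤ (∫ x, f x ^ 2 ∂μ) * (t * t) + (2 * ∫ x, f x * g x ∂μ) * t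
      + ∫ x, g x ^ 2 ∂μ := by
    intro t
    have h0 : 0 ≤ ∫ x, (t * f x + g x) ^ 2 ∂μ := integral_nonneg fun x => sq_nonneg _
    calc (0:ℝ) ≤ ∫ x, (t * f x + g x) ^ 2 ∂μ := h0
      _ = (∫ x, f x ^ 2 ∂μ) * (t * t) + (2 * ∫ x, f x * g x ∂μ) * t + ∫ x, g x ^ 2 ∂μ := by
        have h1 : Integrable (fun x => t ^ 2 * f x ^ 2 + (2 * t) * (f x * g x)) μ :=
          (hf2.const_mul _).add (hfg.const_mul _)
        have h2 : Integrable (fun x => t ^ 2 * f x ^ 2) μ := hf2.const_mul _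
        have h3 : Integrable (fun x => (2 * t) * (f x * g x)) μ := hfg.const_mul _
        rw [expand t, integral_add h1 hg2, integral_add h2 h3, MeasureTheory.integral_const_mul, MeasureTheory.integral_const_mul]
        ring
  have hd := discrim_le_zero key
  rw [discrim] at hd
  nlinarith [hd]

set_option maxHeartbeats 1000000 in
lemma slice_moments {d : ℕ} (hd : 4 ≤ d) (v : EuclideanSpace ℝ (Fin d)) (hv : ‖v‖ = 1)
    (ξ : ℝ) (μ : Measure (EuclideanSpace ℝ (Fin d))) [IsProbabilityMeasure μ]
    (hae : ∀ᵐ x ∂μ, ‖x‖ = 1 ∧ ⟪v, x⟫ = ξ)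
    (hinv : ∀ f : EuclideanSpace ℝ (Fin d) ≃ₗᵢ[ℝ] EuclideanSpace ℝ (Fin d),
      f v = v → Measure.map (⇑f) μ = μ)
    (w : EuclideanSpace ℝ (Fin d)) (hw : ‖w‖ = 1) (hwv : ⟪v, w⟫ = 0) :
    ∫ x, ⟪w, x⟫ ^ 2 ∂μ = (1 - ξ ^ 2) / ((d : ℝ) - 1) ∧
    ∫ x, ⟪w, x⟫ ^ 4 ∂μ = 3 * (1 - ξ ^ 2) ^ 2 / (((d : ℝ) - 1) * ((d : ℝ) + 1)) := by
  haveI : NeZero d := ⟨by omega⟩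
  have hInt : ∀ (g : EuclideanSpace ℝ (Fin d) → ℝ) (C : ℝ), Continuous g →
      (∀ x, ‖x‖ = 1 → |g x| ≤ C) → Integrable g μ := by
    intro g C hc hb
    exact (integrable_const C).mono' hc.aestronglyMeasurable
      (hae.mono fun x hx => by rw [Real.norm_eq_abs]; exact hb x hx.1)
  have hip1 : ∀ a : EuclideanSpace ℝ (Fin d), ‖a‖ = 1 → ∀ x, ‖x‖ = 1 → |⟪a, x⟫| ≤ 1 := by
    intro a ha x hx
    have := abs_real_inner_le_norm a x
    rwa [ha, hx, one_mul] at this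
  have hIntM : ∀ (a₁ a₂ : EuclideanSpace ℝ (Fin d)) (k l : ℕ), ‖a₁‖ = 1 → ‖a₂‖ = 1 →
      Integrable (fun x => ⟪a₁, x⟫ ^ k * ⟪a₂, x⟫ ^ l) μ := by
    intro a₁ a₂ k l h1 h2
    refine hInt _ 1 (((continuous_const.inner continuous_id).pow k).mul
      ((continuous_const.inner continuous_id).pow l)) fun x hx => ?_
    rw [abs_mul, abs_pow, abs_pow]
    calc |⟪a₁, x⟫| ^ k * |⟪a₂, x⟫| ^ l ≤ 1 ^ k * 1 ^ l := by
          apply mul_le_mul (pow_le_pow_left₀ (abs_nonneg _) (hip1 a₁ h1 x hx) k)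
            (pow_le_pow_left₀ (abs_nonneg _) (hip1 a₂ h2 x hx) l) (by positivity) (by positivity)
      _ = 1 := by norm_num
  have hcard : Module.finrank ℝ (EuclideanSpace ℝ (Fin d)) = Fintype.card (Fin d) := by simp
  have horth : Orthonormal ℝ (Set.restrict {(0 : Fin d)} (fun _ => v)) := by
    constructor
    · intro i; exact hv
    · intro i j hij
      exact absurd (Subtype.ext (by
        have hi := i.2; have hj := j.2
        simp only [Set.mem_singleton_iff] at hi hj
        rw [hi, hj])) hij
  obtain ⟨b, hb0⟩ := horth.exists_orthonormalBasis_extension_of_card_eq hcard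
  have hbv : b 0 = v := hb0 0 rfl
  have hors := b.orthonormal
  set A : Finset (Fin d) := Finset.univ.erase 0 with hA
  have hcardA : A.card = d - 1 := by
    rw [hA, Finset.card_erase_of_mem (Finset.mem_univ _), Finset.card_univ, Fintype.card_fin]
  have hcardAR : (A.card : ℝ) = (d : ℝ) - 1 := by
    rw [hcardA, Nat.cast_sub (by omega), Nat.cast_one]
  have hdR : (4 : ℝ) ≤ (d : ℝ) := by exact_mod_cast hd
  have hdm1 : ((d : ℝ) - 1) ≠ 0 := by linarith
  have hdp1 : ((d : ℝ) + 1) ≠ 0 := by linarith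
  have hbiu : ∀ i, ‖b i‖ = 1 := hors.1
  have hbiv : ∀ i ∈ A, ⟪v, b i⟫ = 0 := by
    intro i hi
    rw [← hbv]
    exact hors.2 (Ne.symm (Finset.ne_of_mem_erase hi))
  -- Parseval a.e.
  have hsumA : ∀ᵐ x ∂μ, ∑ i ∈ A, ⟪b i, x⟫ ^ 2 = 1 - ξ ^ 2 := by
    refine hae.mono fun x hx => ?_
    have h1 := b.sum_inner_mul_inner x x
    rw [real_inner_self_eq_norm_sq, hx.1, one_pow] at h1
    have h2 : ∑ i, ⟪b i, x⟫ ^ 2 = 1 := by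
      rw [← h1]
      refine Finset.sum_congr rfl fun i _ => ?_
      rw [real_inner_comm x (b i)]; ring
    have h4 : ⟪b 0, x⟫ = ξ := by rw [hbv]; exact hx.2
    have h5 : ∑ i ∈ A, ⟪b i, x⟫ ^ 2 + ⟪b 0, x⟫ ^ 2 = ∑ i, ⟪b i, x⟫ ^ 2 := by
      rw [hA]
      exact Finset.sum_erase_add Finset.univ _ (Finset.mem_univ 0)
    rw [h4, h2] at h5
    linarith
  -- second moment
  set m2 := ∫ x, ⟪w, x⟫ ^ 2 ∂μ with hm2d
  have hsame2 : ∀ i ∈ A, ∫ x, ⟪b i, x⟫ ^ 2 ∂μ = m2 :=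
    fun i hi => integral_single_eq hinv (b i) w (by rw [hbiu i, hw]) (hbiv i hi) hwv
      (fun t => t ^ 2) (continuous_pow 2)
  have hInt2 : ∀ i : Fin d, Integrable (fun x => ⟪b i, x⟫ ^ 2) μ := by
    intro i
    have h := hIntM (b i) (b i) 2 0 (hbiu i) (hbiu i)
    simpa using h
  have h2tot : (∑ i ∈ A, ∫ x, ⟪b i, x⟫ ^ 2 ∂μ) = 1 - ξ ^ 2 := by
    rw [← integral_finset_sum A fun i _ => hInt2 i, integral_congr_ae hsumA]
    simp
  have hm2 : m2 = (1 - ξ ^ 2) / ((d : ℝ) - 1) := by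
    rw [Finset.sum_congr rfl hsame2, Finset.sum_const, nsmul_eq_mul, hcardAR] at h2tot
    field_simp
    linarith
  -- fourth moment setup
  have hd1 : (1 : ℕ) < d := by omega
  have hd2 : (2 : ℕ) < d := by omega
  set i1 : Fin d := ⟨1, hd1⟩ with hi1d
  set i2 : Fin d := ⟨2, hd2⟩ with hi2d
  have hi1A : i1 ∈ A := by
    rw [hA, Finset.mem_erase]
    exact ⟨by simp [hi1d, Fin.ext_iff], Finset.mem_univ _⟩
  have hi2A : i2 ∈ A := by
    rw [hA, Finset.mem_erase]
    exact ⟨by simp [hi2d, Fin.ext_iff], Finset.mem_univ _⟩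
  have hi12 : i1 ≠ i2 := by simp [hi1d, hi2d, Fin.ext_iff]
  set B1 := b i1 with hB1
  set B2 := b i2 with hB2
  have hB1u : ‖B1‖ = 1 := hbiu i1
  have hB2u : ‖B2‖ = 1 := hbiu i2
  have hB1v : ⟪v, B1⟫ = 0 := hbiv i1 hi1A
  have hB2v : ⟪v, B2⟫ = 0 := hbiv i2 hi2A
  have hB12 : ⟪B1, B2⟫ = 0 := hors.2 hi12
  have hB21 : ⟪B2, B1⟫ = 0 := by rw [real_inner_comm]; exact hB12
  set m4 := ∫ x, ⟪w, x⟫ ^ 4 ∂μ with hm4d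
  set b4 := ∫ x, ⟪B1, x⟫ ^ 2 * ⟪B2, x⟫ ^ 2 ∂μ with hb4d
  have hsame4 : ∀ i ∈ A, ∫ x, ⟪b i, x⟫ ^ 4 ∂μ = m4 :=
    fun i hi => integral_single_eq hinv (b i) w (by rw [hbiu i, hw]) (hbiv i hi) hwv
      (fun t => t ^ 4) (continuous_pow 4)
  have hpair4 : ∀ i ∈ A, ∀ j ∈ A, i ≠ j → ∫ x, ⟪b i, x⟫ ^ 2 * ⟪b j, x⟫ ^ 2 ∂μ = b4 :=
    fun i hi j hj hij => integral_pair_eq hinv (b i) (b j) B1 B2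
      (by rw [hbiu, hB1u]) (by rw [hbiu, hB2u]) (hbiv i hi) (hbiv j hj)
      hB1v hB2v (hors.2 hij) hB12 (fun s t => s ^ 2 * t ^ 2)
      ((continuous_fst.pow 2).mul (continuous_snd.pow 2))
  have hodd1 : ∫ x, ⟪B1, x⟫ ^ 3 * ⟪B2, x⟫ ∂μ = 0 := by
    have h := integral_pair_eq hinv B1 B2 B1 (-B2) rfl (norm_neg B2).symm
      hB1v hB2v hB1v (by rw [inner_neg_right, hB2v, neg_zero]) hB12
      (by rw [inner_neg_right, hB12, neg_zero]) (fun s t => s ^ 3 * t)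
      ((continuous_fst.pow 3).mul continuous_snd)
    have h2 : ∫ x, ⟪B1, x⟫ ^ 3 * ⟪-B2, x⟫ ∂μ = - ∫ x, ⟪B1, x⟫ ^ 3 * ⟪B2, x⟫ ∂μ := by
      rw [← integral_neg]
      congr 1; funext x
      rw [inner_neg_left]; ring
    rw [h2] at h
    linarith
  have hodd2 : ∫ x, ⟪B1, x⟫ * ⟪B2, x⟫ ^ 3 ∂μ = 0 := by
    have h := integral_pair_eq hinv B1 B2 B1 (-B2) rfl (norm_neg B2).symm
      hB1v hB2v hB1v (by rw [inner_neg_right, hB2v, neg_zero]) hB12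
      (by rw [inner_neg_right, hB12, neg_zero]) (fun s t => s * t ^ 3)
      (continuous_fst.mul (continuous_snd.pow 3))
    have h2 : ∫ x, ⟪B1, x⟫ * ⟪-B2, x⟫ ^ 3 ∂μ = - ∫ x, ⟪B1, x⟫ * ⟪B2, x⟫ ^ 3 ∂μ := by
      rw [← integral_neg]
      congr 1; funext x
      rw [inner_neg_left]; ring
    rw [h2] at h
    linarith
  -- the rotated vector e'
  set e' : EuclideanSpace ℝ (Fin d) := (Real.sqrt 2)⁻¹ • (B1 + B2) with he'
  have hs2 : Real.sqrt 2 ^ 2 = 2 := Real.sq_sqrt (by norm_num)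
  have hs2pos : 0 < Real.sqrt 2 := Real.sqrt_pos.2 (by norm_num)
  have hBB : ⟪B1 + B2, B1 + B2⟫ = 2 := by
    rw [inner_add_left, inner_add_right, inner_add_right, real_inner_self_eq_norm_sq,
      real_inner_self_eq_norm_sq, hB1u, hB2u, hB12, hB21]
    norm_num
  have he'n : ‖e'‖ = 1 := by
    have hinner : ⟪e', e'⟫ = 1 := by
      rw [he', real_inner_smul_left, real_inner_smul_right, hBB]
      rw [← mul_assoc, ← mul_inv]
      rw [show Real.sqrt 2 * Real.sqrt 2 = 2 by nlinarith [hs2]]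
      norm_num
    rw [real_inner_self_eq_norm_sq] at hinner
    nlinarith [norm_nonneg e']
  have he'v : ⟪v, e'⟫ = 0 := by
    rw [he', inner_smul_right, inner_add_right, hB1v, hB2v]
    norm_num
  have he'4 : ∫ x, ⟪e', x⟫ ^ 4 ∂μ = m4 :=
    integral_single_eq hinv e' w (by rw [he'n, hw]) he'v hwv (fun t => t ^ 4) (continuous_pow 4)
  have hs4 : ((Real.sqrt 2)⁻¹ : ℝ) ^ 4 = (4 : ℝ)⁻¹ := by
    rw [inv_pow]
    congr 1
    nlinarith [hs2]
  -- expansion of (z1+z2)^4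
  have hI40 := hIntM B1 B2 4 0 hB1u hB2u
  have hI04 := hIntM B1 B2 0 4 hB1u hB2u
  have hI22 := hIntM B1 B2 2 2 hB1u hB2u
  have hI31 := hIntM B1 B2 3 1 hB1u hB2u
  have hI13 := hIntM B1 B2 1 3 hB1u hB2u
  have hm43b : m4 = 3 * b4 := by
    have hpt : (fun x => ⟪e', x⟫ ^ 4) = fun x => (4:ℝ)⁻¹ *
        (⟪B1, x⟫ ^ 4 * ⟪B2, x⟫ ^ 0 + (⟪B1, x⟫ ^ 0 * ⟪B2, x⟫ ^ 4 +
          (6 * (⟪B1, x⟫ ^ 2 * ⟪B2, x⟫ ^ 2) + (4 * (⟪B1, x⟫ ^ 3 * ⟪B2, x⟫ ^ 1)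
            + 4 * (⟪B1, x⟫ ^ 1 * ⟪B2, x⟫ ^ 3))))) := by
      funext x
      rw [he', real_inner_smul_left, inner_add_left, mul_pow, hs4]
      ring
    have hJ45 : Integrable (fun x => 4 * (⟪B1, x⟫ ^ 3 * ⟪B2, x⟫ ^ 1)
        + 4 * (⟪B1, x⟫ ^ 1 * ⟪B2, x⟫ ^ 3)) μ := (hI31.const_mul 4).add (hI13.const_mul 4)
    have hJ345 : Integrable (fun x => 6 * (⟪B1, x⟫ ^ 2 * ⟪B2, x⟫ ^ 2)
        + (4 * (⟪B1, x⟫ ^ 3 * ⟪B2, x⟫ ^ 1) + 4 * (⟪B1, x⟫ ^ 1 * ⟪B2, x⟫ ^ 3))) μ :=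
      (hI22.const_mul 6).add hJ45
    have hJ2345 : Integrable (fun x => ⟪B1, x⟫ ^ 0 * ⟪B2, x⟫ ^ 4
        + (6 * (⟪B1, x⟫ ^ 2 * ⟪B2, x⟫ ^ 2) + (4 * (⟪B1, x⟫ ^ 3 * ⟪B2, x⟫ ^ 1)
          + 4 * (⟪B1, x⟫ ^ 1 * ⟪B2, x⟫ ^ 3)))) μ := hI04.add hJ345
    have hsplit : ∫ x, ⟪e', x⟫ ^ 4 ∂μ = (4:ℝ)⁻¹ *
        ((∫ x, ⟪B1, x⟫ ^ 4 * ⟪B2, x⟫ ^ 0 ∂μ) + ((∫ x, ⟪B1, x⟫ ^ 0 * ⟪B2, x⟫ ^ 4 ∂μ) +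
          (6 * (∫ x, ⟪B1, x⟫ ^ 2 * ⟪B2, x⟫ ^ 2 ∂μ) + (4 * (∫ x, ⟪B1, x⟫ ^ 3 * ⟪B2, x⟫ ^ 1 ∂μ)
            + 4 * (∫ x, ⟪B1, x⟫ ^ 1 * ⟪B2, x⟫ ^ 3 ∂μ))))) := by
      rw [hpt, integral_const_mul, integral_add hI40 hJ2345, integral_add hI04 hJ345,
        integral_add (hI22.const_mul 6) hJ45, integral_add (hI31.const_mul 4) (hI13.const_mul 4),
        integral_const_mul, integral_const_mul, integral_const_mul]
    have hv40 : ∫ x, ⟪B1, x⟫ ^ 4 * ⟪B2, x⟫ ^ 0 ∂μ = m4 := by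
      have : (fun x => ⟪B1, x⟫ ^ 4 * ⟪B2, x⟫ ^ 0) = fun x => ⟪B1, x⟫ ^ 4 := by
        funext x; ring
      rw [this]
      exact hsame4 i1 hi1A
    have hv04 : ∫ x, ⟪B1, x⟫ ^ 0 * ⟪B2, x⟫ ^ 4 ∂μ = m4 := by
      have : (fun x => ⟪B1, x⟫ ^ 0 * ⟪B2, x⟫ ^ 4) = fun x => ⟪B2, x⟫ ^ 4 := by
        funext x; ring
      rw [this]
      exact hsame4 i2 hi2A
    have hv31 : ∫ x, ⟪B1, x⟫ ^ 3 * ⟪B2, x⟫ ^ 1 ∂μ = 0 := by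
      have : (fun x => ⟪B1, x⟫ ^ 3 * ⟪B2, x⟫ ^ 1) = fun x => ⟪B1, x⟫ ^ 3 * ⟪B2, x⟫ := by
        funext x; ring
      rw [this]
      exact hodd1
    have hv13 : ∫ x, ⟪B1, x⟫ ^ 1 * ⟪B2, x⟫ ^ 3 ∂μ = 0 := by
      have : (fun x => ⟪B1, x⟫ ^ 1 * ⟪B2, x⟫ ^ 3) = fun x => ⟪B1, x⟫ * ⟪B2, x⟫ ^ 3 := by
        funext x; ring
      rw [this]
      exact hodd2
    rw [hsplit, hv40, hv04, hv31, hv13, ← hb4d] at he'4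
    linarith
  -- sum of squares squared
  have hIntPair : ∀ i j : Fin d, Integrable (fun x => ⟪b i, x⟫ ^ 2 * ⟪b j, x⟫ ^ 2) μ :=
    fun i j => hIntM (b i) (b j) 2 2 (hbiu i) (hbiu j)
  have hsq : ∫ x, (∑ i ∈ A, ⟪b i, x⟫ ^ 2) ^ 2 ∂μ = (1 - ξ ^ 2) ^ 2 := by
    have hcong : (fun x => (∑ i ∈ A, ⟪b i, x⟫ ^ 2) ^ 2) =ᵐ[μ]
        fun _ => (1 - ξ ^ 2) ^ 2 := hsumA.mono fun x hx => by
          show (∑ i ∈ A, ⟪b i, x⟫ ^ 2) ^ 2 = (1 - ξ ^ 2) ^ 2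
          rw [hx]
    rw [integral_congr_ae hcong]
    simp
  have hexp2 : ∫ x, (∑ i ∈ A, ⟪b i, x⟫ ^ 2) ^ 2 ∂μ
      = ∑ i ∈ A, ∑ j ∈ A, ∫ x, ⟪b i, x⟫ ^ 2 * ⟪b j, x⟫ ^ 2 ∂μ := by
    have hpt : (fun x => (∑ i ∈ A, ⟪b i, x⟫ ^ 2) ^ 2)
        = fun x => ∑ i ∈ A, ∑ j ∈ A, ⟪b i, x⟫ ^ 2 * ⟪b j, x⟫ ^ 2 := by
      funext x
      rw [sq, Finset.sum_mul_sum]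
    rw [hpt, integral_finset_sum A fun i _ => integrable_finset_sum A fun j _ => hIntPair i j]
    exact Finset.sum_congr rfl fun i _ => integral_finset_sum A fun j _ => hIntPair i j
  have hcast2 : ((d - 1 - 1 : ℕ) : ℝ) = (d : ℝ) - 2 := by
    have h : d - 1 - 1 = d - 2 := by omega
    rw [h, Nat.cast_sub (by omega)]
    norm_num
  have hdiag : ∀ i ∈ A, ∑ j ∈ A, ∫ x, ⟪b i, x⟫ ^ 2 * ⟪b j, x⟫ ^ 2 ∂μ
      = m4 + ((d : ℝ) - 2) * b4 := by
    intro i hi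
    have hii : ∫ x, ⟪b i, x⟫ ^ 2 * ⟪b i, x⟫ ^ 2 ∂μ = m4 := by
      have : (fun x => ⟪b i, x⟫ ^ 2 * ⟪b i, x⟫ ^ 2) = fun x => ⟪b i, x⟫ ^ 4 := by
        funext x; ring
      rw [this]
      exact hsame4 i hi
    have hoff : ∑ j ∈ A.erase i, ∫ x, ⟪b i, x⟫ ^ 2 * ⟪b j, x⟫ ^ 2 ∂μ = ((d:ℝ) - 2) * b4 := by
      rw [Finset.sum_congr rfl (fun j hj => hpair4 i hi j (Finset.mem_of_mem_erase hj)
        (Ne.symm (Finset.ne_of_mem_erase hj))), Finset.sum_const, nsmul_eq_mul,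
        Finset.card_erase_of_mem hi, hcardA, hcast2]
    have hsplit := Finset.add_sum_erase A
      (fun j => ∫ x, ⟪b i, x⟫ ^ 2 * ⟪b j, x⟫ ^ 2 ∂μ) hi
    rw [← hsplit, hii, hoff]
  have htot : (1 - ξ ^ 2) ^ 2 = ((d:ℝ) - 1) * (m4 + ((d:ℝ) - 2) * b4) := by
    rw [← hsq, hexp2, Finset.sum_congr rfl hdiag, Finset.sum_const, nsmul_eq_mul, hcardAR]
  have hb4v : (1 - ξ ^ 2) ^ 2 = (((d:ℝ) - 1) * ((d:ℝ) + 1)) * b4 := by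
    rw [htot, hm43b]
    ring
  refine ⟨hm2, ?_⟩
  rw [hm43b, hb4v]
  field_simp

set_option maxHeartbeats 1200000 in
theorem stmt_14 (d : ℕ) (hd : 4 ≤ d)
    (u v : EuclideanSpace ℝ (Fin d)) (hu : ‖u‖ = 1) (hv : ‖v‖ = 1)
    (θ : ℝ) (hθ : θ = Real.arccos ⟪u, v⟫) (hθub : θ ≤ 9 * Real.pi / 10)
    (ξ : ℝ) (hξ0 : 0 ≤ ξ) (hξ : ξ ≤ θ / (4 * Real.sqrt d))
    (μ : Measure (EuclideanSpace ℝ (Fin d))) (hμ : IsUniformOnSlice v ξ μ) :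
    ∫ x, (if ⟪u, x⟫ < 0 then ⟪u, x⟫ else 0) ∂μ ≤ ξ - θ / (36 * Real.sqrt d) := by
  obtain ⟨hprob, hsupp, hinv⟩ := hμ
  haveI := hprob
  have hae : ∀ᵐ x ∂μ, ‖x‖ = 1 ∧ ⟪v, x⟫ = ξ := by
    rw [MeasureTheory.ae_iff]
    have : {x : EuclideanSpace ℝ (Fin d) | ¬(‖x‖ = 1 ∧ ⟪v, x⟫ = ξ)}
        = {x : EuclideanSpace ℝ (Fin d) | ‖x‖ = 1 ∧ ⟪v, x⟫ = ξ}ᶜ := by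
      ext x; simp
    rw [this]
    exact hsupp
  have hπ : 0 < Real.pi := Real.pi_pos
  have hdR : (4 : ℝ) ≤ (d : ℝ) := by exact_mod_cast hd
  have hsd2 : Real.sqrt d ^ 2 = (d : ℝ) := Real.sq_sqrt (by linarith)
  have h2sd : (2 : ℝ) ≤ Real.sqrt d := by
    rw [show (2:ℝ) = Real.sqrt 4 by
      rw [show (4:ℝ) = 2 ^ 2 by norm_num, Real.sqrt_sq (by norm_num)]]
    exact Real.sqrt_le_sqrt hdR
  have hsdpos : 0 < Real.sqrt d := by linarith
  have hθ0 : 0 ≤ θ := hθ ▸ Real.arccos_nonneg _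
  rcases eq_or_lt_of_le hθ0 with hzero | hθpos
  · -- θ = 0 forces ξ = 0 and the integrand is nonpositive
    have hξz : ξ = 0 := by
      have := hξ
      rw [← hzero] at this
      simp at this
      linarith
    have hle : ∫ x, (if ⟪u, x⟫ < 0 then ⟪u, x⟫ else 0) ∂μ ≤ 0 := by
      apply integral_nonpos
      intro x
      dsimp
      split
      · linarith [show ⟪u, x⟫ < 0 from by assumption]
      · exact le_refl 0
    rw [hξz, ← hzero]
    simpa using hle
  -- main case : θ > 0
  have hθπ : θ < Real.pi := lt_of_le_of_lt hθub (by linarith)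
  have hsin : 0 < Real.sin θ := Real.sin_pos_of_pos_of_lt_pi hθpos hθπ
  have huv1 : |⟪u, v⟫| ≤ 1 := by
    have := abs_real_inner_le_norm u v
    rwa [hu, hv, one_mul] at this
  have hcos : Real.cos θ = ⟪u, v⟫ := by
    rw [hθ]
    exact Real.cos_arccos (by linarith [abs_le.1 huv1]) (by linarith [abs_le.1 huv1])
  set c := Real.cos θ with hc
  set s := Real.sin θ with hs
  have hcs : c ^ 2 + s ^ 2 = 1 := by
    rw [hc, hs]; rw [add_comm]; exact Real.sin_sq_add_cos_sq θ
  set w : EuclideanSpace ℝ (Fin d) := s⁻¹ • (u - c • v) with hwdef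
  have hvu : ⟪v, u⟫ = c := by rw [real_inner_comm, ← hcos]
  have hvv : ⟪v, v⟫ = 1 := by rw [real_inner_self_eq_norm_sq, hv]; norm_num
  have huu : ⟪u, u⟫ = 1 := by rw [real_inner_self_eq_norm_sq, hu]; norm_num
  have hwv : ⟪v, w⟫ = 0 := by
    rw [hwdef, inner_smul_right, inner_sub_right, inner_smul_right, hvu, hvv]
    ring
  have huv : ⟪u, v⟫ = c := hcos.symm
  have hw1 : ‖w‖ = 1 := by
    have h1 : ⟪u - c • v, u - c • v⟫ = s ^ 2 := by
      rw [inner_sub_left, inner_sub_right, inner_sub_right, real_inner_smul_left,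
        real_inner_smul_left, real_inner_smul_right, real_inner_smul_right, huu, hvv, hvu, huv]
      nlinarith [hcs]
    have hip : ⟪w, w⟫ = 1 := by
      rw [hwdef, real_inner_smul_left, real_inner_smul_right, h1]
      field_simp
    rw [real_inner_self_eq_norm_sq] at hip
    nlinarith [norm_nonneg w]
  have hdecomp : ∀ x : EuclideanSpace ℝ (Fin d), ⟪u, x⟫ = c * ⟪v, x⟫ + s * ⟪w, x⟫ := by
    intro x
    rw [hwdef, real_inner_smul_left, inner_sub_left, real_inner_smul_left]
    field_simp
    ring

  -- integrability helpers
  have hInt : ∀ (g : EuclideanSpace ℝ (Fin d) → ℝ) (C : ℝ), Continuous g →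
      (∀ x, ‖x‖ = 1 → |g x| ≤ C) → Integrable g μ := by
    intro g C hcg hb
    exact (integrable_const C).mono' hcg.aestronglyMeasurable
      (hae.mono fun x hx => by rw [Real.norm_eq_abs]; exact hb x hx.1)
  have hip1 : ∀ a : EuclideanSpace ℝ (Fin d), ‖a‖ = 1 → ∀ x, ‖x‖ = 1 → |⟪a, x⟫| ≤ 1 := by
    intro a ha x hx
    have := abs_real_inner_le_norm a x
    rwa [ha, hx, one_mul] at this
  have hcontw : Continuous fun x : EuclideanSpace ℝ (Fin d) => ⟪w, x⟫ :=
    continuous_const.inner continuous_id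
  have hcontu : Continuous fun x : EuclideanSpace ℝ (Fin d) => ⟪u, x⟫ :=
    continuous_const.inner continuous_id
  have hcontv : Continuous fun x : EuclideanSpace ℝ (Fin d) => ⟪v, x⟫ :=
    continuous_const.inner continuous_id
  have habs1 : ∀ x : EuclideanSpace ℝ (Fin d), ‖x‖ = 1 → |⟪w, x⟫| ≤ 1 := hip1 w hw1
  have hIu : Integrable (fun x => ⟪u, x⟫) μ := hInt _ 1 hcontu (hip1 u hu)
  have hIv : Integrable (fun x => ⟪v, x⟫) μ := hInt _ 1 hcontv (hip1 v hv)
  have hIz : Integrable (fun x => ⟪w, x⟫) μ := hInt _ 1 hcontw habs1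
  have hIzmax : Integrable (fun x => max ⟪w, x⟫ 0) μ := by
    refine hInt _ 1 (hcontw.max continuous_const) fun x hx => ?_
    have h := habs1 x hx
    rw [abs_le] at h ⊢
    exact ⟨by linarith [le_max_right (⟪w,x⟫ : ℝ) (0:ℝ)], max_le h.2 (by norm_num)⟩
  have hInegmax : Integrable (fun x => max (-⟪w, x⟫) 0) μ := by
    refine hInt _ 1 ((hcontw.neg).max continuous_const) fun x hx => ?_
    have h := habs1 x hx
    rw [abs_le] at h ⊢
    exact ⟨by linarith [le_max_right (-⟪w,x⟫ : ℝ) (0:ℝ)], max_le (by linarith) (by norm_num)⟩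
  have hIumax : Integrable (fun x => max ⟪u, x⟫ 0) μ := by
    refine hInt _ 1 (hcontu.max continuous_const) fun x hx => ?_
    have h := hip1 u hu x hx
    rw [abs_le] at h ⊢
    exact ⟨by linarith [le_max_right (⟪u,x⟫ : ℝ) (0:ℝ)], max_le h.2 (by norm_num)⟩
  have hIzabs : Integrable (fun x => |⟪w, x⟫|) μ :=
    hInt _ 1 hcontw.abs fun x hx => by rw [abs_abs]; exact habs1 x hx
  have hIz2 : Integrable (fun x => ⟪w, x⟫ ^ 2) μ :=
    hInt _ 1 (hcontw.pow 2) fun x hx => by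
      rw [abs_pow]; exact pow_le_one₀ (abs_nonneg _) (habs1 x hx)
  have hIz4 : Integrable (fun x => ⟪w, x⟫ ^ 4) μ :=
    hInt _ 1 (hcontw.pow 4) fun x hx => by
      rw [abs_pow]; exact pow_le_one₀ (abs_nonneg _) (habs1 x hx)
  have hIG : Integrable (fun x => |⟪w, x⟫| * ⟪w, x⟫ ^ 2) μ := by
    refine hInt _ 1 (hcontw.abs.mul (hcontw.pow 2)) fun x hx => ?_
    have hb := habs1 x hx
    rw [abs_mul, abs_abs, abs_pow]
    calc |⟪w,x⟫| * |⟪w,x⟫| ^ 2 = |⟪w,x⟫| ^ 3 := by ring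
      _ ≤ 1 := pow_le_one₀ (abs_nonneg _) hb
  -- ∫ z = 0 by symmetry
  have hnegwv : ⟪v, -w⟫ = 0 := by rw [inner_neg_right, hwv, neg_zero]
  have hz0 : ∫ x, ⟪w, x⟫ ∂μ = 0 := by
    have h := integral_single_eq hinv w (-w) (norm_neg w).symm hwv hnegwv
      (fun t => t) continuous_id
    have h2 : ∫ x, ⟪-w, x⟫ ∂μ = - ∫ x, ⟪w, x⟫ ∂μ := by
      rw [← integral_neg]
      congr 1; funext x
      rw [inner_neg_left]
    rw [h2] at h
    linarith
  -- ∫ |z| = 2 ∫ max z 0 by symmetry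
  have hzmax : (∫ x, |⟪w, x⟫| ∂μ) = 2 * ∫ x, max ⟪w, x⟫ 0 ∂μ := by
    have h := integral_single_eq hinv w (-w) (norm_neg w).symm hwv hnegwv
      (fun t => max t 0) (continuous_id.max continuous_const)
    have h2 : ∫ x, max ⟪-w, x⟫ 0 ∂μ = ∫ x, max (-⟪w, x⟫) 0 ∂μ := by
      congr 1; funext x; rw [inner_neg_left]
    rw [h2] at h
    have h3 : (fun x : EuclideanSpace ℝ (Fin d) => |⟪w, x⟫|)
        = fun x => max ⟪w, x⟫ 0 + max (-⟪w, x⟫) 0 := by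
      funext x
      rcases le_total (⟪w, x⟫ : ℝ) 0 with hle | hle
      · rw [abs_of_nonpos hle, max_eq_right hle, max_eq_left (by linarith), zero_add]
      · rw [abs_of_nonneg hle, max_eq_left hle, max_eq_right (by linarith), add_zero]
    rw [h3, integral_add hIzmax hInegmax, ← h]
    ring
  -- moments
  obtain ⟨hm2, hm4⟩ := slice_moments hd v hv ξ μ hae hinv w hw1 hwv
  set L := ∫ x, |⟪w, x⟫| ∂μ with hLdef
  set M3 := ∫ x, |⟪w, x⟫| * ⟪w, x⟫ ^ 2 ∂μ with hM3def
  have hL0 : 0 ≤ L := integral_nonneg fun x => abs_nonneg _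
  have hM30 : 0 ≤ M3 := integral_nonneg fun x => mul_nonneg (abs_nonneg _) (sq_nonneg _)
  have e1 : (fun x : EuclideanSpace ℝ (Fin d) =>
      Real.sqrt |⟪w, x⟫| * (Real.sqrt |⟪w, x⟫| * |⟪w, x⟫|)) = fun x => ⟪w, x⟫ ^ 2 := by
    funext x
    rw [← mul_assoc, Real.mul_self_sqrt (abs_nonneg _), abs_mul_abs_self, pow_two]
  have e2 : (fun x : EuclideanSpace ℝ (Fin d) => Real.sqrt |⟪w, x⟫| ^ 2)
      = fun x => |⟪w, x⟫| := by
    funext x; rw [Real.sq_sqrt (abs_nonneg _)]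
  have e3 : (fun x : EuclideanSpace ℝ (Fin d) => (Real.sqrt |⟪w, x⟫| * |⟪w, x⟫|) ^ 2)
      = fun x => |⟪w, x⟫| * ⟪w, x⟫ ^ 2 := by
    funext x
    rw [mul_pow, Real.sq_sqrt (abs_nonneg _), sq_abs]
  have hCS1 : (∫ x, ⟪w, x⟫ ^ 2 ∂μ) ^ 2 ≤ L * M3 := by
    have h := integral_cauchy_schwarz μ (fun x => Real.sqrt |⟪w, x⟫|)
      (fun x => Real.sqrt |⟪w, x⟫| * |⟪w, x⟫|)
      (by rw [e2]; exact hIzabs) (by rw [e3]; exact hIG) (by rw [e1]; exact hIz2)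
    rw [e1, e2, e3] at h
    exact h
  have hCS2 : M3 ^ 2 ≤ (∫ x, ⟪w, x⟫ ^ 2 ∂μ) * ∫ x, ⟪w, x⟫ ^ 4 ∂μ := by
    have e4 : (fun x : EuclideanSpace ℝ (Fin d) => |⟪w, x⟫| ^ 2) = fun x => ⟪w, x⟫ ^ 2 := by
      funext x; rw [sq_abs]
    have e5 : (fun x : EuclideanSpace ℝ (Fin d) => (⟪w, x⟫ ^ 2) ^ 2)
        = fun x => ⟪w, x⟫ ^ 4 := by
      funext x; ring
    have h := integral_cauchy_schwarz μ (fun x => |⟪w, x⟫|) (fun x => ⟪w, x⟫ ^ 2)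
      (by rw [e4]; exact hIz2) (by rw [e5]; exact hIz4) hIG
    rw [e4, e5] at h
    exact h
  -- numeric facts
  set D := (d : ℝ) with hD
  have hπlt : Real.pi < 3.1416 := by linarith [Real.pi_lt_d6]
  have hπsq : Real.pi ^ 2 < 9.8697 := by nlinarith only [hπlt, hπ]
  have hξsqD : ξ ^ 2 * D ≤ 81 * Real.pi ^ 2 / 1600 := by
    have h1 : ξ ≤ 9 * Real.pi / 10 / (4 * Real.sqrt d) :=
      le_trans hξ (by apply div_le_div_of_nonneg_right hθub (by positivity))
    have h2 : ξ ^ 2 ≤ (9 * Real.pi / 10) ^ 2 / (4 * Real.sqrt d) ^ 2 := by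
      rw [← div_pow]
      exact pow_le_pow_left₀ hξ0 h1 2
    have h3 : (4 * Real.sqrt d) ^ 2 = 16 * D := by
      rw [mul_pow, hsd2]; norm_num
    rw [h3] at h2
    have h4 : ξ ^ 2 * (16 * D) ≤ (9 * Real.pi / 10) ^ 2 := by
      rw [← le_div_iff₀ (by positivity : (0:ℝ) < 16 * D)]
      exact h2
    nlinarith only [h4]
  have hξsq : ξ ^ 2 ≤ 81 * Real.pi ^ 2 / 6400 := by nlinarith only [hξsqD, hdR, sq_nonneg ξ]
  have hPpos : (1:ℝ)/2 ≤ 1 - ξ ^ 2 := by nlinarith only [hπsq, hξsq]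
  have hDm0 : (0:ℝ) < D - 1 := by rw [hD]; linarith
  have hDp0 : (0:ℝ) < D + 1 := by rw [hD]; linarith
  have hD0 : (0:ℝ) < D := by rw [hD]; linarith
  have hP0 : (0:ℝ) < 1 - ξ ^ 2 := by linarith
  -- combine CS to get L^2 lower bound
  have hL2b : (∫ x, ⟪w, x⟫ ^ 2 ∂μ) ^ 3 ≤ L ^ 2 * ∫ x, ⟪w, x⟫ ^ 4 ∂μ := by
    set a := ∫ x, ⟪w, x⟫ ^ 2 ∂μ with hadef
    set bb := ∫ x, ⟪w, x⟫ ^ 4 ∂μ with hbdef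
    have ha : 0 < a := by rw [hm2]; exact div_pos hP0 hDm0
    have s1 : a ^ 2 * a ^ 2 ≤ (L * M3) * (L * M3) :=
      mul_le_mul hCS1 hCS1 (sq_nonneg a) (mul_nonneg hL0 hM30)
    have s3 : L ^ 2 * M3 ^ 2 ≤ L ^ 2 * (a * bb) :=
      mul_le_mul_of_nonneg_left hCS2 (sq_nonneg L)
    have s4 : a ^ 2 * a ^ 2 ≤ L ^ 2 * (a * bb) := by nlinarith only [s1, s3]
    nlinarith only [s4, ha]
  have hc1' : ((1 - ξ ^ 2) / (D - 1)) ^ 3 ≤ L ^ 2 * (3 * (1 - ξ ^ 2) ^ 2 / ((D - 1) * (D + 1))) := by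
    rw [← hm2, ← hm4]
    exact hL2b
  have hc1 : (1 - ξ ^ 2) ^ 3 * ((D - 1) * (D + 1)) ≤ (L ^ 2 * (3 * (1 - ξ ^ 2) ^ 2)) * (D - 1) ^ 3 := by
    rw [div_pow, ← mul_div_assoc] at hc1'
    rw [← div_le_div_iff₀ (by positivity) (by positivity)]
    calc (1 - ξ ^ 2) ^ 3 / (D - 1) ^ 3 ≤ L ^ 2 * (3 * (1 - ξ ^ 2) ^ 2) / ((D - 1) * (D + 1)) := hc1'
      _ = L ^ 2 * (3 * (1 - ξ ^ 2) ^ 2) / ((D - 1) * (D + 1)) := rfl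
  have hstep : (1 - ξ ^ 2) * (D + 1) ≤ 3 * L ^ 2 * (D - 1) ^ 2 := by
    nlinarith only [hc1, mul_pos (mul_pos hP0 hP0) hDm0]
  have hnum : Real.pi ^ 2 * (D - 1) ^ 2 ≤ 12 * D * ((1 - ξ ^ 2) * (D + 1)) := by
    have hx2 : ξ ^ 2 * D * (D + 1) ≤ 81 * Real.pi ^ 2 / 1600 * (D + 1) :=
      mul_le_mul_of_nonneg_right hξsqD (by linarith)
    nlinarith only [hx2, hπsq, hD0, hDp0, hdR]
  have hL2 : Real.pi ^ 2 / (36 * D) ≤ L ^ 2 := by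
    rw [div_le_iff₀ (by positivity)]
    have h12 : 12 * D * ((1 - ξ ^ 2) * (D + 1)) ≤ 12 * D * (3 * L ^ 2 * (D - 1) ^ 2) :=
      mul_le_mul_of_nonneg_left hstep (by positivity)
    nlinarith only [hnum, h12, mul_pos hDm0 hDm0, hD0]
  have hLlb : Real.pi / (6 * Real.sqrt d) ≤ L := by
    have hppos : 0 < Real.pi / (6 * Real.sqrt d) := by positivity
    have heq : (Real.pi / (6 * Real.sqrt d)) ^ 2 = Real.pi ^ 2 / (36 * D) := by
      rw [div_pow, mul_pow, hsd2]
      norm_num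
    have hpl : (Real.pi / (6 * Real.sqrt d)) ^ 2 ≤ L ^ 2 := by rw [heq]; exact hL2
    nlinarith only [hpl, hL0, hppos]
  -- sin θ lower bound via concavity
  have hconc := strictConcaveOn_sin_Icc.concaveOn
  have hmemM : (9 * Real.pi / 10 : ℝ) ∈ Set.Icc (0:ℝ) Real.pi := ⟨by positivity, by linarith⟩
  have hmem0 : (0:ℝ) ∈ Set.Icc (0:ℝ) Real.pi := ⟨le_refl _, by linarith⟩
  have hmem6 : (Real.pi / 6 : ℝ) ∈ Set.Icc (0:ℝ) Real.pi := ⟨by positivity, by linarith⟩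
  have hsin9 : (3:ℝ)/10 ≤ Real.sin (9 * Real.pi / 10) := by
    have hcc := hconc.2 hmem0 hmem6 (by norm_num : (0:ℝ) ≤ 2/5) (by norm_num : (0:ℝ) ≤ 3/5)
      (by norm_num)
    simp only [smul_eq_mul, Real.sin_zero, mul_zero, zero_add] at hcc
    rw [Real.sin_pi_div_six] at hcc
    have harg : (3:ℝ)/5 * (Real.pi / 6) = Real.pi / 10 := by ring
    rw [harg] at hcc
    have h910 : Real.sin (9 * Real.pi / 10) = Real.sin (Real.pi / 10) := by
      rw [show (9 * Real.pi / 10 : ℝ) = Real.pi - Real.pi / 10 by ring, Real.sin_pi_sub]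
    rw [h910]
    linarith
  have hsinlb : θ / (3 * Real.pi) ≤ s := by
    have ht0 : 0 ≤ θ / (9 * Real.pi / 10) := by positivity
    have ht1 : θ / (9 * Real.pi / 10) ≤ 1 := by
      rw [div_le_one (by positivity)]
      exact hθub
    have hcc := hconc.2 hmemM hmem0 ht0
      (show (0:ℝ) ≤ 1 - θ / (9 * Real.pi / 10) by linarith)
      (show θ / (9 * Real.pi / 10) + (1 - θ / (9 * Real.pi / 10)) = 1 by ring)
    simp only [smul_eq_mul, Real.sin_zero, mul_zero, add_zero] at hcc
    have harg : θ / (9 * Real.pi / 10) * (9 * Real.pi / 10) = θ := by field_simp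
    rw [harg] at hcc
    have h1 : θ / (9 * Real.pi / 10) * (3/10) ≤ θ / (9 * Real.pi / 10) * Real.sin (9 * Real.pi / 10) :=
      mul_le_mul_of_nonneg_left hsin9 ht0
    have h2 : θ / (9 * Real.pi / 10) * (3/10) = θ / (3 * Real.pi) := by
      field_simp
      ring
    rw [hs]
    linarith
  -- indicator estimates
  set As : Set (EuclideanSpace ℝ (Fin d)) := {x | 0 < ⟪w, x⟫} with hAs
  have hAmeas : MeasurableSet As := measurableSet_lt measurable_const hcontw.measurable
  set p := (μ As).toReal with hpdef
  have hp0 : 0 ≤ p := ENNReal.toReal_nonneg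
  have hp1 : p ≤ 1 := by
    rw [hpdef]
    calc (μ As).toReal ≤ (1 : ENNReal).toReal := ENNReal.toReal_mono (by norm_num) prob_le_one
      _ = 1 := by simp
  have hIndInt : Integrable (As.indicator fun y => ⟪u, y⟫) μ := hIu.indicator hAmeas
  have hind_le : ∀ x, As.indicator (fun y => ⟪u, y⟫) x ≤ max ⟪u, x⟫ 0 := by
    intro x
    by_cases hx : x ∈ As
    · rw [Set.indicator_of_mem hx]; exact le_max_left _ _
    · rw [Set.indicator_of_notMem hx]; exact le_max_right _ _
  have hmono : ∫ x, As.indicator (fun y => ⟪u, y⟫) x ∂μ ≤ ∫ x, max ⟪u, x⟫ 0 ∂μ :=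
    integral_mono hIndInt hIumax hind_le
  have hind_dec : (As.indicator fun y => ⟪u, y⟫)
      = fun x => c * As.indicator (fun y => ⟪v, y⟫) x + s * max ⟪w, x⟫ 0 := by
    funext x
    by_cases hx : x ∈ As
    · rw [Set.indicator_of_mem hx, Set.indicator_of_mem hx, hdecomp x,
        max_eq_left (le_of_lt (show (0:ℝ) < ⟪w, x⟫ from hx))]
    · rw [Set.indicator_of_notMem hx, Set.indicator_of_notMem hx,
        max_eq_right (le_of_not_gt (show ¬ (0:ℝ) < ⟪w, x⟫ from hx))]
      ring
  have hiv_ind : ∫ x, As.indicator (fun y => ⟪v, y⟫) x ∂μ = ξ * p := by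
    have hcong : (As.indicator fun y => ⟪v, y⟫) =ᵐ[μ] As.indicator (fun _ => ξ) :=
      hae.mono fun x hx => by
        by_cases hmem : x ∈ As
        · rw [Set.indicator_of_mem hmem, Set.indicator_of_mem hmem]; exact hx.2
        · rw [Set.indicator_of_notMem hmem, Set.indicator_of_notMem hmem]
    rw [integral_congr_ae hcong, integral_indicator_const _ hAmeas, smul_eq_mul, hpdef, measureReal_def]
    ring
  have hind_val : ∫ x, As.indicator (fun y => ⟪u, y⟫) x ∂μ
      = c * (ξ * p) + s * ∫ x, max ⟪w, x⟫ 0 ∂μ := by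
    rw [hind_dec]
    have hIa : Integrable (fun x => c * As.indicator (fun y => ⟪v, y⟫) x) μ :=
      (hIv.indicator hAmeas).const_mul c
    have hIb : Integrable (fun x => s * max ⟪w, x⟫ 0) μ := hIzmax.const_mul s
    rw [integral_add hIa hIb, integral_const_mul, integral_const_mul, hiv_ind]
  have hvint : ∫ x, ⟪v, x⟫ ∂μ = ξ := by
    have hcong : (fun x : EuclideanSpace ℝ (Fin d) => ⟪v, x⟫) =ᵐ[μ] fun _ => ξ :=
      hae.mono fun x hx => hx.2
    rw [integral_congr_ae hcong]
    simp
  have huint : ∫ x, ⟪u, x⟫ ∂μ = c * ξ := by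
    have hdec : (fun x : EuclideanSpace ℝ (Fin d) => ⟪u, x⟫)
        = fun x => c * ⟪v, x⟫ + s * ⟪w, x⟫ := funext hdecomp
    rw [hdec, integral_add (hIv.const_mul c) (hIz.const_mul s), integral_const_mul,
      integral_const_mul, hvint, hz0]
    ring
  -- key lower bound for s * E[max z 0]
  have hkey : θ / (36 * Real.sqrt d) ≤ s * ∫ x, max ⟪w, x⟫ 0 ∂μ := by
    have hmul : (θ / (3 * Real.pi)) * (Real.pi / (6 * Real.sqrt d)) ≤ s * L :=
      mul_le_mul hsinlb hLlb (by positivity) (le_of_lt hsin)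
    have heq2 : (θ / (3 * Real.pi)) * (Real.pi / (6 * Real.sqrt d)) = θ / (18 * Real.sqrt d) := by
      field_simp
      ring
    have hE : ∫ x, max ⟪w, x⟫ 0 ∂μ = L / 2 := by linarith [hzmax]
    rw [hE]
    have h36 : θ / (18 * Real.sqrt d) = 2 * (θ / (36 * Real.sqrt d)) := by
      field_simp
      ring
    have hh : s * (L / 2) = (s * L) / 2 := by ring
    linarith [hmul, heq2, h36, hh]
  -- final assembly
  have hif : (fun x : EuclideanSpace ℝ (Fin d) => if ⟪u, x⟫ < 0 then ⟪u, x⟫ else 0)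
      = fun x => ⟪u, x⟫ - max ⟪u, x⟫ 0 := by
    funext x
    by_cases hx : ⟪u, x⟫ < 0
    · rw [if_pos hx, max_eq_right (le_of_lt hx), sub_zero]
    · rw [if_neg hx, max_eq_left (le_of_not_gt hx), sub_self]
  rw [hif, integral_sub hIu hIumax, huint]
  have hub : c * (ξ * p) + s * ∫ x, max ⟪w, x⟫ 0 ∂μ ≤ ∫ x, max ⟪u, x⟫ 0 ∂μ := by
    rw [← hind_val]; exact hmono
  have hcle1 : c ≤ 1 := by rw [hc]; exact Real.cos_le_one θ
  have hcm1 : -1 ≤ c := by rw [hc]; exact Real.neg_one_le_cos θ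
  nlinarith only [hkey, hub, mul_nonneg hξ0 (mul_nonneg (sub_nonneg.2 hcle1) (sub_nonneg.2 hp1)),
    hξ0, hp0, hp1, mul_nonneg hξ0 hp0]
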